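/- Let q be a prime power, n ≥ 2k ≥ 4, and P a point of F_q^n. If T is a k-dimensional subspace of F_q^n not containing P, then the number of k-dimensional subspaces containing P that intersect T non-trivially is at most [k]_q · [n-2 choose k-2]_q. -/

import Mathlib

set_option linter.unusedSectionVars false
set_option maxHeartbeats 1000000
set_option synthInstance.maxHeartbeats 400000

/-- The Gaussian binomial coefficient `[n choose k]_q` as a natural number,
defined by the Pascal-type recurrence `[n+1, k+1]_q = q^(k+1)·[n, k+1]_q + [n, k]_q`. -/
def qbin (q : ℕ) : ℕ → ℕ → ℕ
  | _, 0 => 1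
  | 0, _ + 1 => 0
  | n + 1, k + 1 => q ^ (k + 1) * qbin q n (k + 1) + qbin q n k

namespace DictatorAux

open Module Submodule

lemma finite_submodule' {F : Type*} [Field F] (V : Type*) [AddCommGroup V] [Module F V]
    [Finite V] : Finite (Submodule F V) :=
  Finite.of_injective (fun W => (W : Set V)) SetLike.coe_injective

lemma card_le_mul_of_fibers' {α β : Type*} [Finite α] [Finite β] (f : α → β) (c : ℕ)
    (h : ∀ b, Nat.card {a // f a = b} ≤ c) : Nat.card α ≤ Nat.card β * c := by
  classical
  cases nonempty_fintype α; cases nonempty_fintype β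
  rw [Nat.card_eq_fintype_card, Nat.card_eq_fintype_card,
    ← Fintype.card_congr (Equiv.sigmaFiberEquiv f), Fintype.card_sigma]
  calc ∑ b : β, Fintype.card {a // f a = b} ≤ ∑ _b : β, c :=
        Finset.sum_le_sum (fun b _ => by rw [← Nat.card_eq_fintype_card]; exact h b)
    _ = Fintype.card β * c := by simp [mul_comm]

lemma card_eq_mul_of_fibers' {α β : Type*} [Finite α] [Finite β] (f : α → β) (c : ℕ)
    (h : ∀ b, Nat.card {a // f a = b} = c) : Nat.card α = Nat.card β * c := by
  classical
  cases nonempty_fintype α; cases nonempty_fintype β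
  rw [Nat.card_eq_fintype_card, Nat.card_eq_fintype_card,
    ← Fintype.card_congr (Equiv.sigmaFiberEquiv f), Fintype.card_sigma]
  calc ∑ b : β, Fintype.card {a // f a = b} = ∑ _b : β, c :=
        Finset.sum_congr rfl (fun b _ => by rw [← Nat.card_eq_fintype_card]; exact h b)
    _ = Fintype.card β * c := by simp [mul_comm]

lemma finrank_map_mkQ_add' {F : Type*} [Field F] {V : Type*} [AddCommGroup V] [Module F V]
    [FiniteDimensional F V] (L W : Submodule F V) :
    finrank F (W.map L.mkQ) + finrank F ↥(W ⊓ L) = finrank F W := by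
  have h := LinearMap.finrank_range_add_finrank_ker (L.mkQ.domRestrict W)
  rw [LinearMap.range_domRestrict, LinearMap.ker_domRestrict, Submodule.ker_mkQ] at h
  have e : finrank F ↥(Submodule.comap W.subtype L) = finrank F ↥(W ⊓ L) := by
    have := (Submodule.equivMapOfInjective W.subtype W.injective_subtype
      (Submodule.comap W.subtype L)).finrank_eq
    rwa [Submodule.map_comap_subtype] at this
  rw [e] at h
  exact h

lemma exists_line_le {F : Type*} [Field F] {V : Type*} [AddCommGroup V] [Module F V]
    (U : Submodule F V) (hU : U ≠ ⊥) :
    ∃ Q : Submodule F V, finrank F Q = 1 ∧ Q ≤ U := by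
  obtain ⟨v, hv, hv0⟩ := Submodule.exists_mem_ne_zero_of_ne_bot hU
  exact ⟨F ∙ v, finrank_span_singleton hv0,
    (Submodule.span_singleton_le_iff_mem v U).mpr hv⟩

lemma nat_card_le_one {α : Type*} [Subsingleton α] : Nat.card α ≤ 1 := by
  rcases isEmpty_or_nonempty α with h | h
  · simp [Nat.card_of_isEmpty]
  · exact le_of_eq (Nat.card_eq_one_iff_unique.mpr ⟨‹_›, h⟩)

lemma subsingleton_dim_zero {F : Type*} [Field F] {V : Type*} [AddCommGroup V] [Module F V]
    [FiniteDimensional F V] : Subsingleton {W : Submodule F V // finrank F W = 0} := by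
  constructor
  intro a b
  apply Subtype.ext
  rw [Submodule.finrank_eq_zero.mp a.2, Submodule.finrank_eq_zero.mp b.2]

/-- Counting complements of a line: at most `q ^ (dim X - 1)` of them. -/
lemma card_isCompl_le' (q : ℕ) {F : Type*} [Field F] [Fintype F] (hq : Fintype.card F = q)
    (X : Type*) [AddCommGroup X] [Module F X] [FiniteDimensional F X]
    (p : Submodule F X) (hp : finrank F p = 1) :
    Nat.card {W : Submodule F X // IsCompl p W} ≤ q ^ (finrank F X - 1) := by
  haveI : Finite X := Module.finite_of_finite F
  haveI : Finite (Submodule F X) := finite_submodule' X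
  rcases isEmpty_or_nonempty {W : Submodule F X // IsCompl p W} with hE | ⟨⟨W₀, hW₀⟩⟩
  · simp [Nat.card_of_isEmpty]
  haveI : Finite (X →ₗ[F] ↥p) := Module.finite_of_finite F
  let R : (X →ₗ[F] ↥p) →ₗ[F] (↥p →ₗ[F] ↥p) := LinearMap.lcomp F ↥p p.subtype
  have hRproj : ∀ (W : Submodule F X) (h : IsCompl p W),
      R (p.projectionOnto W h) = LinearMap.id := by
    intro W h
    ext x
    exact congrArg Subtype.val (Submodule.projectionOnto_apply_left h x)
  let Φ : {W : Submodule F X // IsCompl p W} → ↥(LinearMap.ker R) := fun W =>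
    ⟨p.projectionOnto W.1 W.2 - p.projectionOnto W₀ hW₀, by
      simp [LinearMap.mem_ker, map_sub, hRproj]⟩
  have hΦ : Function.Injective Φ := by
    intro a b hab
    have h1 : p.projectionOnto a.1 a.2 = p.projectionOnto b.1 b.2 := by
      have := congrArg Subtype.val hab
      simpa [Φ, sub_left_inj] using this
    have h2 : a.1 = b.1 := by
      rw [← Submodule.linearProjOfIsCompl_ker a.2, ← Submodule.linearProjOfIsCompl_ker b.2, h1]
    exact Subtype.ext h2
  have hcard := Nat.card_le_card_of_injective Φ hΦ
  have hnontriv : Nontrivial ↥p := (Module.finrank_pos_iff (R := F)).mp (by omega)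
  have hid : (LinearMap.id : ↥p →ₗ[F] ↥p) ≠ 0 := by
    obtain ⟨x, hx⟩ := exists_ne (0 : ↥p)
    intro h
    exact hx (by simpa using LinearMap.congr_fun h x)
  have hrange : finrank F ↥(LinearMap.range R) = 1 := by
    have hle : finrank F ↥(LinearMap.range R) ≤ 1 := by
      have := Submodule.finrank_le (LinearMap.range R)
      rwa [Module.finrank_linearMap, hp, mul_one] at this
    have hge : 1 ≤ finrank F ↥(LinearMap.range R) := by
      rw [Submodule.one_le_finrank_iff]
      intro h
      have : R (p.projectionOnto W₀ hW₀) = 0 := by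
        have : R (p.projectionOnto W₀ hW₀) ∈ LinearMap.range R := ⟨_, rfl⟩
        rwa [h, Submodule.mem_bot] at this
      rw [hRproj] at this
      exact hid this
    omega
  have hker : finrank F ↥(LinearMap.ker R) = finrank F X - 1 := by
    have h := LinearMap.finrank_range_add_finrank_ker R
    rw [Module.finrank_linearMap, hp, mul_one, hrange] at h
    omega
  have : Nat.card ↥(LinearMap.ker R) = q ^ (finrank F X - 1) := by
    cases nonempty_fintype ↥(LinearMap.ker R)
    rw [Nat.card_eq_fintype_card, card_eq_pow_finrank (K := F), hq, hker]
  omega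

universe v

/-- The number of `j`-dimensional subspaces of an `m`-dimensional space over a field
with `q` elements is at most `qbin q m j`. -/
lemma count_dim_le (q : ℕ) {F : Type*} [Field F] [Fintype F] (hq : Fintype.card F = q) :
    ∀ (m j : ℕ) (V : Type v) [AddCommGroup V] [Module F V] [FiniteDimensional F V],
      finrank F V = m →
      Nat.card {W : Submodule F V // finrank F W = j} ≤ qbin q m j := by
  intro m
  induction m with
  | zero =>
    intro j V _ _ _ hV
    match j with
    | 0 =>
      haveI := subsingleton_dim_zero (F := F) (V := V)
      exact nat_card_le_one
    | j + 1 =>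
      haveI : IsEmpty {W : Submodule F V // finrank F W = j + 1} := by
        constructor
        intro ⟨W, hW⟩
        have := Submodule.finrank_le W
        omega
      simp [Nat.card_of_isEmpty, qbin]
  | succ m ih =>
    intro j V _ _ _ hV
    match j with
    | 0 =>
      haveI := subsingleton_dim_zero (F := F) (V := V)
      exact nat_card_le_one
    | j + 1 =>
      haveI : Finite V := Module.finite_of_finite F
      haveI : Finite (Submodule F V) := finite_submodule' V
      haveI : Nontrivial V := (Module.finrank_pos_iff (R := F) (M := V)).mp (by omega)
      obtain ⟨v, hv⟩ := exists_ne (0 : V)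
      set p : Submodule F V := F ∙ v with hpdef
      have hp : finrank F p = 1 := finrank_span_singleton hv
      have hquot : finrank F (V ⧸ p) = m := by
        have := Submodule.finrank_quotient_add_finrank p
        omega
      haveI : Finite (V ⧸ p) := Module.finite_of_finite F
      haveI : Finite (Submodule F (V ⧸ p)) := finite_submodule' _
      -- part A : subspaces containing p
      have hA : Nat.card {W : Submodule F V // finrank F W = j + 1 ∧ p ≤ W} ≤ qbin q m j := by
        have hinj : Function.Injective
            (fun W : {W : Submodule F V // finrank F W = j + 1 ∧ p ≤ W} =>
              (⟨W.1.map p.mkQ, by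
                have h := finrank_map_mkQ_add' p W.1
                rw [inf_eq_right.mpr W.2.2] at h
                omega⟩ : {W' : Submodule F (V ⧸ p) // finrank F W' = j})) := by
          intro a b hab
          apply Subtype.ext
          have h1 := congrArg (fun W' : {W' : Submodule F (V ⧸ p) // finrank F W' = j} =>
            Submodule.comap p.mkQ W'.1) hab
          simpa [Submodule.comap_map_eq, Submodule.ker_mkQ,
            sup_eq_left.mpr a.2.2, sup_eq_left.mpr b.2.2] using h1
        calc Nat.card {W : Submodule F V // finrank F W = j + 1 ∧ p ≤ W}
            ≤ Nat.card {W' : Submodule F (V ⧸ p) // finrank F W' = j} :=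
              Nat.card_le_card_of_injective _ hinj
          _ ≤ qbin q m j := ih j (V ⧸ p) hquot
      -- part B : subspaces not containing p
      have hB : Nat.card {W : Submodule F V // finrank F W = j + 1 ∧ ¬ p ≤ W} ≤
          qbin q m (j + 1) * q ^ (j + 1) := by
        have hbot : ∀ W : Submodule F V, ¬ p ≤ W → W ⊓ p = ⊥ := by
          intro W hpW
          by_contra hne
          have h1 : W ⊓ p ≤ p := inf_le_right
          have h2 : 1 ≤ finrank F ↥(W ⊓ p) := Submodule.one_le_finrank_iff.mpr hne
          have h3 : W ⊓ p = p := Submodule.eq_of_le_of_finrank_le h1 (by omega)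
          exact hpW (h3 ▸ inf_le_left)
        set g : {W : Submodule F V // finrank F W = j + 1 ∧ ¬ p ≤ W} →
            {W' : Submodule F (V ⧸ p) // finrank F W' = j + 1} := fun W =>
          ⟨W.1.map p.mkQ, by
            have h := finrank_map_mkQ_add' p W.1
            rw [hbot W.1 W.2.2, finrank_bot] at h
            omega⟩ with hgdef
        have hfib : ∀ b, Nat.card {a // g a = b} ≤ q ^ (j + 1) := by
          intro ⟨W', hW'⟩
          set X : Submodule F V := Submodule.comap p.mkQ W' with hXdef
          haveI : Finite (Submodule F ↥X) := finite_submodule' _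
          have hpX : p ≤ X := by
            intro x hx
            show p.mkQ x ∈ W'
            rw [show p.mkQ x = 0 from (Submodule.Quotient.mk_eq_zero p).mpr hx]
            exact W'.zero_mem
          have hWle : ∀ W : Submodule F V, W.map p.mkQ = W' → W ≤ X := by
            intro W h
            have := Submodule.le_comap_map p.mkQ W
            rwa [h] at this
          have hmapX : X.map p.mkQ = W' :=
            Submodule.map_comap_eq_of_surjective (Submodule.mkQ_surjective p) W'
          have hXrank : finrank F X = j + 2 := by
            have h := finrank_map_mkQ_add' p X
            rw [hmapX, inf_eq_right.mpr hpX] at h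
            omega
          set p₁ : Submodule F ↥X := Submodule.comap X.subtype p with hp₁def
          have hp₁ : finrank F p₁ = 1 := by
            rw [(Submodule.comapSubtypeEquivOfLe hpX).finrank_eq]; exact hp
          have hinj2 : ∃ Ψ : {a // g a = ⟨W', hW'⟩} → {W₁ : Submodule F ↥X // IsCompl p₁ W₁},
              Function.Injective Ψ := by
            refine ⟨fun a => ⟨Submodule.comap X.subtype a.1.1, ?_⟩, ?_⟩
            · obtain ⟨⟨W, hWdim, hWp⟩, ha⟩ := a
              have hmapW : W.map p.mkQ = W' := congrArg Subtype.val ha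
              have hWX : W ≤ X := hWle W hmapW
              have hWpbot : W ⊓ p = ⊥ := hbot W hWp
              constructor
              · rw [disjoint_iff]
                have : p₁ ⊓ Submodule.comap X.subtype W = Submodule.comap X.subtype (p ⊓ W) := by
                  rw [Submodule.comap_inf, hp₁def]
                rw [this, inf_comm, hWpbot]
                simp [Submodule.comap_bot, Submodule.ker_subtype]
              · rw [codisjoint_iff]
                have hsup : p ⊔ W = X := by
                  apply Submodule.eq_of_le_of_finrank_le (sup_le hpX hWX)
                  have h2 := Submodule.finrank_sup_add_finrank_inf_eq p W
                  rw [inf_comm, hWpbot] at h2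
                  simp only [finrank_bot] at h2
                  omega
                apply Submodule.map_injective_of_injective X.injective_subtype
                rw [Submodule.map_sup, Submodule.map_comap_subtype,
                  Submodule.map_comap_subtype, Submodule.map_subtype_top,
                  inf_eq_right.mpr hpX, inf_eq_right.mpr hWX, hsup]
            · intro a b hab
              have h1 := congrArg (fun W₁ : {W₁ : Submodule F ↥X // IsCompl p₁ W₁} =>
                Submodule.map X.subtype W₁.1) hab
              have hWXa : a.1.1 ≤ X := hWle a.1.1 (congrArg Subtype.val a.2)
              have hWXb : b.1.1 ≤ X := hWle b.1.1 (congrArg Subtype.val b.2)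
              simp only [Submodule.map_comap_subtype, inf_eq_right.mpr hWXa,
                inf_eq_right.mpr hWXb] at h1
              exact Subtype.ext (Subtype.ext h1)
          obtain ⟨Ψ, hΨ⟩ := hinj2
          calc Nat.card {a // g a = ⟨W', hW'⟩}
              ≤ Nat.card {W₁ : Submodule F ↥X // IsCompl p₁ W₁} :=
                Nat.card_le_card_of_injective Ψ hΨ
            _ ≤ q ^ (finrank F ↥X - 1) := card_isCompl_le' q hq ↥X p₁ hp₁
            _ = q ^ (j + 1) := by rw [hXrank]; norm_num
        calc Nat.card {W : Submodule F V // finrank F W = j + 1 ∧ ¬ p ≤ W}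
            ≤ Nat.card {W' : Submodule F (V ⧸ p) // finrank F W' = j + 1} * q ^ (j + 1) :=
              card_le_mul_of_fibers' g (q ^ (j + 1)) hfib
          _ ≤ qbin q m (j + 1) * q ^ (j + 1) :=
              Nat.mul_le_mul_right _ (ih (j + 1) (V ⧸ p) hquot)
      -- combine the two parts
      have hsplit : Nat.card {W : Submodule F V // finrank F W = j + 1} ≤
          Nat.card {W : Submodule F V // finrank F W = j + 1 ∧ p ≤ W} +
          Nat.card {W : Submodule F V // finrank F W = j + 1 ∧ ¬ p ≤ W} := by
        classical
        rw [← Nat.card_sum]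
        apply Nat.card_le_card_of_injective
          (f := fun W : {W : Submodule F V // finrank F W = j + 1} =>
            if h : p ≤ W.1 then Sum.inl ⟨W.1, W.2, h⟩ else Sum.inr ⟨W.1, W.2, h⟩)
        intro a b hab
        by_cases ha : p ≤ a.1 <;> by_cases hb : p ≤ b.1
        · simp only [dif_pos ha, dif_pos hb] at hab
          have h2 := Sum.inl.inj hab
          exact Subtype.ext (Subtype.mk_eq_mk.mp h2)
        · simp only [dif_pos ha, dif_neg hb] at hab
          exact absurd hab (by simp)
        · simp only [dif_neg ha, dif_pos hb] at hab
          exact absurd hab (by simp)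
        · simp only [dif_neg ha, dif_neg hb] at hab
          have h2 := Sum.inr.inj hab
          exact Subtype.ext (Subtype.mk_eq_mk.mp h2)
      calc Nat.card {W : Submodule F V // finrank F W = j + 1}
          ≤ _ + _ := hsplit
        _ ≤ qbin q m j + qbin q m (j + 1) * q ^ (j + 1) := Nat.add_le_add hA hB
        _ = qbin q (m + 1) (j + 1) := by rw [qbin]; ring

/-- number of 1-dimensional subspaces times (q-1) equals q^dim - 1 -/
lemma card_lines_mul (q : ℕ) {F : Type*} [Field F] [Fintype F] (hq : Fintype.card F = q)
    (M : Type*) [AddCommGroup M] [Module F M] [FiniteDimensional F M] :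
    Nat.card {Q : Submodule F M // finrank F Q = 1} * (q - 1) =
      q ^ (finrank F M) - 1 := by
  haveI : Finite M := Module.finite_of_finite F
  haveI : Finite (Submodule F M) := finite_submodule' M
  classical
  have key : Nat.card {v : M // v ≠ 0} =
      Nat.card {Q : Submodule F M // finrank F Q = 1} * (q - 1) := by
    apply card_eq_mul_of_fibers'
      (fun v : {v : M // v ≠ 0} =>
        (⟨F ∙ v.1, finrank_span_singleton v.2⟩ : {Q : Submodule F M // finrank F Q = 1}))
    intro ⟨Q, hQ⟩
    have e : {a : {v : M // v ≠ 0} // (F ∙ a.1) = Q} ≃ {w : ↥Q // w ≠ 0} := by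
      refine ⟨fun a => ⟨⟨a.1.1, a.2.le (Submodule.mem_span_singleton_self _)⟩, ?_⟩,
        fun w => ⟨⟨w.1.1, fun h => w.2 (Subtype.ext h)⟩, ?_⟩, ?_, ?_⟩
      · intro h
        exact a.1.2 (congrArg Subtype.val h)
      · apply Submodule.eq_of_le_of_finrank_le
        · rw [Submodule.span_singleton_le_iff_mem]; exact w.1.2
        · rw [hQ]
          have hw : (w.1 : M) ≠ 0 := fun h => w.2 (Subtype.ext h)
          rw [finrank_span_singleton hw]
      · intro a; apply Subtype.ext; apply Subtype.ext; rfl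
      · intro w; apply Subtype.ext; apply Subtype.ext; rfl
    have e0 : {a : {v : M // v ≠ 0} // (⟨F ∙ a.1, finrank_span_singleton a.2⟩ :
        {Q : Submodule F M // finrank F Q = 1}) = ⟨Q, hQ⟩} ≃
        {a : {v : M // v ≠ 0} // (F ∙ a.1) = Q} :=
      Equiv.subtypeEquivRight (fun a => Subtype.ext_iff)
    rw [Nat.card_congr (e0.trans e)]
    cases nonempty_fintype ↥Q
    rw [Nat.card_eq_fintype_card]
    have : Fintype.card {w : ↥Q // w ≠ 0} = Fintype.card ↥Q - 1 := by
      have h2 := Fintype.card_subtype_compl (fun w : ↥Q => w = 0)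
      rw [Fintype.card_subtype_eq (0 : ↥Q)] at h2
      exact h2
    rw [this, card_eq_pow_finrank (K := F), hq, hQ, pow_one]
  rw [← key]
  cases nonempty_fintype M
  rw [Nat.card_eq_fintype_card]
  have : Fintype.card {v : M // v ≠ 0} = Fintype.card M - 1 := by
    have h2 := Fintype.card_subtype_compl (fun w : M => w = 0)
    rw [Fintype.card_subtype_eq (0 : M)] at h2
    exact h2
  rw [this, card_eq_pow_finrank (K := F), hq]

end DictatorAux

open Module DictatorAux

theorem dictator_meets_outside_space (q n k : ℕ) (F : Type*) [Field F] [Fintype F]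
    (hq : Fintype.card F = q) (hk : 2 ≤ k) (hkn : 2 * k ≤ n)
    (P T : Submodule F (Fin n → F)) (hP : Module.finrank F P = 1)
    (hT : Module.finrank F T = k) (hPT : ¬ P ≤ T) :
    (Nat.card {W : Submodule F (Fin n → F) //
        Module.finrank F W = k ∧ P ≤ W ∧ W ⊓ T ≠ ⊥} : ℝ) ≤
      ((q : ℝ) ^ k - 1) / (q - 1) * qbin q (n - 2) (k - 2) := by
  classical
  set V := Fin n → F
  haveI : Finite V := by infer_instance
  haveI : Finite (Submodule F V) := finite_submodule' V
  have hq2 : 2 ≤ q := by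
    rw [← hq]
    exact Fintype.one_lt_card
  have hn : finrank F V = n := Module.finrank_fin_fun F
  set S := {W : Submodule F V // finrank F W = k ∧ P ≤ W ∧ W ⊓ T ≠ ⊥} with hSdef
  set Pts := {Q : Submodule F V // finrank F Q = 1 ∧ Q ≤ T} with hPtsdef
  set B := qbin q (n - 2) (k - 2) with hBdef
  -- choice of a point in W ⊓ T for each W ∈ S
  have hchoice : ∀ W : S, ∃ Q : Submodule F V, finrank F Q = 1 ∧ Q ≤ W.1 ⊓ T :=
    fun W => exists_line_le _ W.2.2.2
  set pt : S → Pts := fun W => ⟨(hchoice W).choose, (hchoice W).choose_spec.1,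
    (hchoice W).choose_spec.2.trans inf_le_right⟩ with hptdef
  -- each fiber of pt has at most B elements
  have hfib : ∀ Q : Pts, Nat.card {W : S // pt W = Q} ≤ B := by
    intro Q
    have hQ1 : finrank F Q.1 = 1 := Q.2.1
    have hQT : Q.1 ≤ T := Q.2.2
    -- P ⊓ Q = ⊥
    have hPQ : P ⊓ Q.1 = ⊥ := by
      by_contra hne
      have h2 : 1 ≤ finrank F ↥(P ⊓ Q.1) := Submodule.one_le_finrank_iff.mpr hne
      have h3 : P ⊓ Q.1 = P := Submodule.eq_of_le_of_finrank_le inf_le_left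
        (by rw [hP]; exact h2)
      have h4 : P ≤ Q.1 := h3 ▸ inf_le_right
      have h5 : P = Q.1 := Submodule.eq_of_le_of_finrank_le h4 (by rw [hP, hQ1])
      exact hPT (h5 ▸ hQT)
    set L : Submodule F V := P ⊔ Q.1 with hLdef
    have hL : finrank F L = 2 := by
      have h := Submodule.finrank_sup_add_finrank_inf_eq P Q.1
      rw [hPQ, finrank_bot, hP, hQ1] at h
      simpa using h
    -- inject the fiber into subspaces of dimension k containing L
    have hinj1 : ∃ f : {W : S // pt W = Q} → {W : Submodule F V // finrank F W = k ∧ L ≤ W},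
        Function.Injective f := by
      refine ⟨fun a => ⟨a.1.1, a.1.2.1, ?_⟩, ?_⟩
      · have h1 := (hchoice a.1).choose_spec.2.trans inf_le_left
        have h2 : (hchoice a.1).choose = Q.1 := congrArg Subtype.val a.2
        rw [h2] at h1
        exact sup_le a.1.2.2.1 h1
      · intro a b hab
        exact Subtype.ext (Subtype.ext (Subtype.mk_eq_mk.mp hab))
    obtain ⟨f, hf⟩ := hinj1
    -- inject those into (k-2)-dimensional subspaces of V ⧸ L
    haveI : Finite (V ⧸ L) := Module.finite_of_finite F
    haveI : Finite (Submodule F (V ⧸ L)) := finite_submodule' _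
    have hinj2 : Function.Injective
        (fun W : {W : Submodule F V // finrank F W = k ∧ L ≤ W} =>
          (⟨W.1.map L.mkQ, by
            have h := finrank_map_mkQ_add' L W.1
            rw [inf_eq_right.mpr W.2.2, hL, W.2.1] at h
            omega⟩ : {W' : Submodule F (V ⧸ L) // finrank F W' = k - 2})) := by
      intro a b hab
      apply Subtype.ext
      have h1 := congrArg (fun W' : {W' : Submodule F (V ⧸ L) // finrank F W' = k - 2} =>
        Submodule.comap L.mkQ W'.1) hab
      simpa [Submodule.comap_map_eq, Submodule.ker_mkQ,
        sup_eq_left.mpr a.2.2, sup_eq_left.mpr b.2.2] using h1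
    have hquot : finrank F (V ⧸ L) = n - 2 := by
      have h := Submodule.finrank_quotient_add_finrank L
      rw [hL, hn] at h
      omega
    calc Nat.card {W : S // pt W = Q}
        ≤ Nat.card {W : Submodule F V // finrank F W = k ∧ L ≤ W} :=
          Nat.card_le_card_of_injective f hf
      _ ≤ Nat.card {W' : Submodule F (V ⧸ L) // finrank F W' = k - 2} :=
          Nat.card_le_card_of_injective _ hinj2
      _ ≤ B := count_dim_le q hq (n - 2) (k - 2) (V ⧸ L) hquot
  have hmain : Nat.card S ≤ Nat.card Pts * B := card_le_mul_of_fibers' pt B hfib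
  -- count the points of T
  have hTfin : finrank F ↥T = k := hT
  have hPtscount : Nat.card Pts * (q - 1) = q ^ k - 1 := by
    have e : {Q' : Submodule F ↥T // finrank F Q' = 1} ≃ Pts := by
      refine ⟨fun Q' => ⟨Q'.1.map T.subtype, ?_, Submodule.map_subtype_le T Q'.1⟩,
        fun Q => ⟨Submodule.comap T.subtype Q.1, ?_⟩, ?_, ?_⟩
      · rw [Submodule.finrank_map_subtype_eq]
        exact Q'.2
      · rw [(Submodule.comapSubtypeEquivOfLe Q.2.2).finrank_eq]
        exact Q.2.1
      · intro Q'
        apply Subtype.ext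
        simp only [Submodule.comap_map_eq, Submodule.ker_subtype, sup_bot_eq]
      · intro Q
        apply Subtype.ext
        simp only [Submodule.map_comap_subtype]
        exact inf_eq_right.mpr Q.2.2
    rw [← Nat.card_congr e, card_lines_mul q hq ↥T, hTfin]
  -- final numeric computation
  have hq1R : (1 : ℝ) < (q : ℝ) := by exact_mod_cast hq2
  have hqne : (q : ℝ) - 1 ≠ 0 := sub_ne_zero.mpr (ne_of_gt hq1R)
  have hNpts : (Nat.card Pts : ℝ) = ((q : ℝ) ^ k - 1) / ((q : ℝ) - 1) := by
    rw [eq_div_iff hqne]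
    have h := congrArg (Nat.cast : ℕ → ℝ) hPtscount
    rw [Nat.cast_mul, Nat.cast_sub (le_trans one_le_two hq2),
      Nat.cast_sub (Nat.one_le_pow _ _ (lt_of_lt_of_le two_pos hq2))] at h
    push_cast at h ⊢
    linear_combination h
  calc (Nat.card S : ℝ) ≤ ((Nat.card Pts * B : ℕ) : ℝ) := by exact_mod_cast hmain
    _ = (Nat.card Pts : ℝ) * (B : ℝ) := by push_cast; ring
    _ = ((q : ℝ) ^ k - 1) / ((q : ℝ) - 1) * (B : ℝ) := by rw [hNpts]
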